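/- The singleton-merging rule is sound: if x and y each occur only in the clause (x ∨ y ∨ δ) of φ, and φ' is obtained by deleting y from that clause with updated weights c'(x) = c(x)·c(¬y) + c(¬x)·c(y) and c'(¬x) = c(¬x)·c(¬y) (other entries unchanged), then the weighted model count of φ with weights c equals the weighted model count of φ' with weights c'. -/
import Mathlib


/-- Soundness of the singleton-merging rule: merging the two singletons x, y of
the clause (x ∨ y ∨ δ) into x, with weights c'(x) = c(x)·c(¬y) + c(¬x)·c(y) and
c'(¬x) = c(¬x)·c(¬y), preserves the weighted model count. -/
theorem singleton_merge_sound
    {α : Type*} [Fintype α] [DecidableEq α]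
    (ψ : (α → Bool) → Prop) [DecidablePred ψ]
    (d : (α → Bool) → Bool)
    (cx cnx cy cny : ℕ) (c : α → Bool → ℕ) :
    (Finset.univ.filter (fun p : Bool × Bool × (α → Bool) =>
        ((if p.1 then 1 else 0) + (if p.2.1 then 1 else 0) +
          (if d p.2.2 then 1 else 0) : ℕ) = 1 ∧ ψ p.2.2)).sum
      (fun p => (if p.1 then cx else cnx) * (if p.2.1 then cy else cny)
        * ∏ v, c v (p.2.2 v))
    = (Finset.univ.filter (fun q : Bool × (α → Bool) =>
        ((if q.1 then 1 else 0) + (if d q.2 then 1 else 0) : ℕ) = 1 ∧ ψ q.2)).sum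
      (fun q => (if q.1 then cx * cny + cnx * cy else cnx * cny)
        * ∏ v, c v (q.2 v)) := by
  rw [Finset.sum_filter, Finset.sum_filter]
  simp only [Fintype.sum_prod_type, Fintype.sum_bool, ← Finset.sum_add_distrib]
  refine Finset.sum_congr rfl fun h _ => ?_
  by_cases hψ : ψ h <;> cases hd : d h <;> simp [hd, hψ] <;> ring
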